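/- Fix n items, a number d, and for each item i a multiset of d real utilities u_i^1 ≥ u_i^2 ≥ ... ≥ u_i^d, together with a strict domination relation ≺ on the utilities that linearly refines the numerical order (u_i^t ≺ u_j^r whenever u_i^t < u_j^r, and any two equal utilities of distinct items are comparable under ≺). Then there exists a perfect coupling c (a partition of the n·d utilities into d chains, each chain containing exactly one utility of every item) that simultaneously realizes K_{[i]} for every i ∈ {1,...,n}; that is, for every i, the number of chains of c whose ≺-maximal utility belongs to one of items 1,...,i equals the maximum of this quantity over all perfect couplings. -/

import Mathlib

noncomputable section

/-- A perfect coupling of `n` multisets of `d` utilities each: chain `t ∈ Fin d` consists of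
the utilities `(i, (c i) t)` for `i ∈ Fin n`, i.e. exactly one utility of every item.
(Partitions of the `n·d` utilities into `d` such chains correspond exactly to such families of
bijections.) -/
abbrev Coupling (n d : ℕ) := Fin n → Equiv.Perm (Fin d)

/-- Chain `t` of the coupling `c` is dominated by item `i` (w.r.t. the strict domination
relation `prec` on utilities, a utility being identified by its item and its index):
the utility of every other item in the chain is dominated by the utility of item `i`. -/
def DominatedBy {n d : ℕ} (prec : Fin n × Fin d → Fin n × Fin d → Prop)
    (c : Coupling n d) (i : Fin n) (t : Fin d) : Prop :=
  ∀ j : Fin n, j ≠ i → prec (j, c j t) (i, c i t)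

/-- `k_i(c)`: the number of chains of `c` dominated by item `i`. -/
def kCount {n d : ℕ} (prec : Fin n × Fin d → Fin n × Fin d → Prop)
    (c : Coupling n d) (i : Fin n) : ℕ :=
  Set.ncard {t : Fin d | DominatedBy prec c i t}

/-- `k_{[i]}(c)`: the number of chains of `c` dominated by one of the items `1,…,i`. -/
def kCum {n d : ℕ} (prec : Fin n × Fin d → Fin n × Fin d → Prop)
    (c : Coupling n d) (i : Fin n) : ℕ :=
  Set.ncard {t : Fin d | ∃ j : Fin n, j ≤ i ∧ DominatedBy prec c j t}

/-- `K_{[i]}`: the maximum of `k_{[i]}(c')` over all perfect couplings `c'`. -/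
def Kmax {n d : ℕ} (prec : Fin n × Fin d → Fin n × Fin d → Prop) (i : Fin n) : ℕ :=
  ⨆ c : Coupling n d, kCum prec c i

open Finset

namespace SimulCoupling

open scoped Classical

variable {n d : ℕ}

/-- value of item `k`'s element in chain `t`, shifted by 1 so that all values are positive -/
def val (ρ : Fin n × Fin d → ℕ) (c : Coupling n d) (k : Fin n) (t : Fin d) : ℕ :=
  ρ (k, c k t) + 1

def supLe (ρ : Fin n × Fin d → ℕ) (c : Coupling n d) (j : Fin n) (t : Fin d) : ℕ :=
  (univ.filter (fun k => k ≤ j)).sup (fun k => val ρ c k t)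

def supGt (ρ : Fin n × Fin d → ℕ) (c : Coupling n d) (j : Fin n) (t : Fin d) : ℕ :=
  (univ.filter (fun k => ¬ k ≤ j)).sup (fun k => val ρ c k t)

/-- chain `t` is won by the items `≤ j` -/
def win (ρ : Fin n × Fin d → ℕ) (c : Coupling n d) (j : Fin n) (t : Fin d) : Prop :=
  supGt ρ c j t < supLe ρ c j t

def Fcnt (ρ : Fin n × Fin d → ℕ) (j : Fin n) (c : Coupling n d) : ℕ :=
  (univ.filter (fun t => win ρ c j t)).card

variable {ρ : Fin n × Fin d → ℕ}

lemma val_le_supLe (c : Coupling n d) {k j : Fin n} (h : k ≤ j) (t : Fin d) :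
    val ρ c k t ≤ supLe ρ c j t :=
  Finset.le_sup (f := fun k => val ρ c k t) (by simp [h])

lemma val_le_supGt (c : Coupling n d) {k j : Fin n} (h : ¬ k ≤ j) (t : Fin d) :
    val ρ c k t ≤ supGt ρ c j t :=
  Finset.le_sup (f := fun k => val ρ c k t) (by simp [not_le.mp h])

lemma supLe_pos (c : Coupling n d) (j : Fin n) (t : Fin d) : 0 < supLe ρ c j t :=
  lt_of_lt_of_le (Nat.succ_pos _) (val_le_supLe c (le_refl j) t)

lemma supLe_mono (c : Coupling n d) {j i : Fin n} (h : j ≤ i) (t : Fin d) :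
    supLe ρ c j t ≤ supLe ρ c i t :=
  Finset.sup_mono (by
    intro k hk
    simp only [mem_filter, mem_univ, true_and] at *
    exact le_trans hk h)

lemma supGt_anti (c : Coupling n d) {j i : Fin n} (h : j ≤ i) (t : Fin d) :
    supGt ρ c i t ≤ supGt ρ c j t :=
  Finset.sup_mono (by
    intro k hk
    simp only [mem_filter, mem_univ, true_and] at *
    exact fun hkj => hk (le_trans hkj h))

lemma exists_attain_supLe (c : Coupling n d) (j : Fin n) (t : Fin d) :
    ∃ k, k ≤ j ∧ supLe ρ c j t = val ρ c k t := by
  have hne : (univ.filter (fun k : Fin n => k ≤ j)).Nonempty := ⟨j, by simp⟩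
  obtain ⟨k, hk, hs⟩ := Finset.exists_mem_eq_sup _ hne (fun k => val ρ c k t)
  exact ⟨k, by simpa using hk, hs⟩

lemma supLe_congr {c c' : Coupling n d} {t : Fin d} (j : Fin n)
    (h : ∀ k, k ≤ j → c' k t = c k t) : supLe ρ c' j t = supLe ρ c j t := by
  apply Finset.sup_congr rfl
  intro k hk
  simp only [mem_filter, mem_univ, true_and] at hk
  simp [val, h k hk]

lemma supGt_congr {c c' : Coupling n d} {t : Fin d} (j : Fin n)
    (h : ∀ k, ¬ k ≤ j → c' k t = c k t) : supGt ρ c' j t = supGt ρ c j t := by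
  apply Finset.sup_congr rfl
  intro k hk
  simp only [mem_filter, mem_univ, true_and] at hk
  simp [val, h k hk]

/-- a chain not won at level `i` is not won at any level `j ≤ i`. -/
lemma not_win_of_le {c : Coupling n d} {i j : Fin n} (hji : j ≤ i) {t : Fin d}
    (h : ¬ win ρ c i t) : ¬ win ρ c j t := by
  unfold win at *
  push_neg at *
  calc supLe ρ c j t ≤ supLe ρ c i t := supLe_mono c hji t
    _ ≤ supGt ρ c i t := h
    _ ≤ supGt ρ c j t := supGt_anti c hji t

/-- conversely, a chain won at level `j ≤ i` is won at level `i`. -/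
lemma win_of_le {c : Coupling n d} {i j : Fin n} (hji : j ≤ i) {t : Fin d}
    (h : win ρ c j t) : win ρ c i t := by
  by_contra hni
  exact not_win_of_le hji hni h

lemma Fcnt_le_of_pointwise {c c' : Coupling n d} {i : Fin n}
    (h : ∀ j, j ≤ i → ∀ t, win ρ c j t → win ρ c' j t) :
    ∀ j, j ≤ i → Fcnt ρ j c ≤ Fcnt ρ j c' := by
  intro j hj
  apply Finset.card_le_card
  intro t ht
  simp only [mem_filter, mem_univ, true_and] at *
  exact h j hj t ht

/-- the set of (indices of) elements of item `g` of value `< v`. -/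
def lowSet (ρ : Fin n × Fin d → ℕ) (g : Fin n) (v : ℕ) : Finset (Fin d) :=
  univ.filter (fun s => ρ (g, s) + 1 < v)

/-- the counting condition guaranteeing (by Hall's theorem) that the set `S` of chains can be
simultaneously won given the `≤ i` parts of the coupling `c`. -/
def Ccond (ρ : Fin n × Fin d → ℕ) (c : Coupling n d) (i : Fin n) (S : Finset (Fin d)) : Prop :=
  ∀ v : ℕ, ∀ g : Fin n, ¬ g ≤ i →
    (S.filter (fun t => supLe ρ c i t ≤ v)).card ≤ (lowSet ρ g v).card

lemma Ccond_of_win (c : Coupling n d) (i : Fin n) {S : Finset (Fin d)}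
    (hS : ∀ t ∈ S, win ρ c i t) : Ccond ρ c i S := by
  intro v g hg
  apply Finset.card_le_card_of_injOn (fun t => c g t)
  · intro t ht
    simp only [mem_coe, mem_filter, mem_univ, true_and] at ht
    have hw := hS t ht.1
    have h1 : val ρ c g t ≤ supGt ρ c i t := val_le_supGt c hg t
    simp only [mem_coe, lowSet, mem_filter, mem_univ, true_and]
    calc ρ (g, c g t) + 1 = val ρ c g t := rfl
      _ ≤ supGt ρ c i t := h1
      _ < supLe ρ c i t := hw
      _ ≤ v := ht.2
  · intro a _ b _ hab
    exact (c g).injective hab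

lemma realize (c : Coupling n d) (i : Fin n) (S : Finset (Fin d)) (hC : Ccond ρ c i S) :
    ∃ c' : Coupling n d, (∀ k, k ≤ i → c' k = c k) ∧ ∀ t ∈ S, win ρ c' i t := by
  have key : ∀ g : Fin n, ¬ g ≤ i →
      ∃ σ : Equiv.Perm (Fin d), ∀ t ∈ S, ρ (g, σ t) + 1 < supLe ρ c i t := by
    intro g hg
    set accept : Fin d → Finset (Fin d) :=
      fun t => if t ∈ S then lowSet ρ g (supLe ρ c i t) else univ with haccept
    have hall : ∀ s : Finset (Fin d), s.card ≤ (s.biUnion accept).card := by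
      intro s
      by_cases hsub : ∀ t ∈ s, t ∈ S
      · rcases s.eq_empty_or_nonempty with rfl | hne
        · simp
        obtain ⟨t0, ht0, hmax⟩ := Finset.exists_max_image s (supLe ρ c i) hne
        have h1 : s ⊆ S.filter (fun t => supLe ρ c i t ≤ supLe ρ c i t0) := by
          intro t ht
          simp only [mem_filter]
          exact ⟨hsub t ht, hmax t ht⟩
        have h2 : accept t0 ⊆ s.biUnion accept := by
          intro x hx
          exact Finset.mem_biUnion.mpr ⟨t0, ht0, hx⟩
        calc s.card ≤ (S.filter (fun t => supLe ρ c i t ≤ supLe ρ c i t0)).card :=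
              Finset.card_le_card h1
          _ ≤ (lowSet ρ g (supLe ρ c i t0)).card := hC _ g hg
          _ = (accept t0).card := by rw [haccept]; simp [hsub t0 ht0]
          _ ≤ (s.biUnion accept).card := Finset.card_le_card h2
      · push_neg at hsub
        obtain ⟨t0, ht0, ht0S⟩ := hsub
        have h2 : (univ : Finset (Fin d)) ⊆ s.biUnion accept := by
          intro x hx
          refine Finset.mem_biUnion.mpr ⟨t0, ht0, ?_⟩
          rw [haccept]
          simp [ht0S]
        calc s.card ≤ (univ : Finset (Fin d)).card := Finset.card_le_card (Finset.subset_univ s)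
          _ ≤ (s.biUnion accept).card := Finset.card_le_card h2
    obtain ⟨f, hfinj, hf⟩ := (Finset.all_card_le_biUnion_card_iff_exists_injective accept).mp hall
    have hbij : Function.Bijective f :=
      (Fintype.bijective_iff_injective_and_card f).mpr ⟨hfinj, rfl⟩
    refine ⟨Equiv.ofBijective f hbij, ?_⟩
    intro t ht
    have := hf t
    rw [haccept] at this
    simp only [ht, if_pos] at this
    simpa [lowSet, Equiv.ofBijective] using this
  refine ⟨fun k => if h : k ≤ i then c k else (key k h).choose, fun k hk => by simp [hk], ?_⟩
  intro t ht
  set c' : Coupling n d := fun k => if h : k ≤ i then c k else (key k h).choose with hc'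
  have hLe : supLe ρ c' i t = supLe ρ c i t := by
    apply Finset.sup_congr rfl
    intro k hk
    simp only [mem_filter, mem_univ, true_and] at hk
    simp [val, hc', hk]
  have hGt : supGt ρ c' i t < supLe ρ c i t := by
    unfold supGt
    rw [Finset.sup_lt_iff (supLe_pos c i t)]
    intro k hk
    simp only [mem_filter, mem_univ, true_and] at hk
    have := (key k hk).choose_spec t ht
    simpa [val, hc', hk] using this
  unfold win
  rw [hLe]
  exact hGt


/-- If only the parts of the coupling on items `> i` change and chain `t` is still won at
level `i`, then it remains won at every level `j ≤ i` at which it was won. -/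
lemma win_preserve_ghost {c c' : Coupling n d} {i : Fin n}
    (hreal : ∀ k, k ≤ i → c' k = c k) {t : Fin d} (hwin' : win ρ c' i t)
    {j : Fin n} (hj : j ≤ i) (hwj : win ρ c j t) : win ρ c' j t := by
  obtain ⟨k₁, hk₁i, hk₁⟩ := exists_attain_supLe c i t
  have hk₁j : k₁ ≤ j := by
    by_contra hnk
    have h1 : val ρ c k₁ t ≤ supGt ρ c j t := val_le_supGt c hnk t
    have h2 : supLe ρ c j t ≤ supLe ρ c i t := supLe_mono c hj t
    rw [← hk₁] at h1
    exact absurd (lt_of_le_of_lt (le_trans h2 h1) hwj) (lt_irrefl _)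
  have hSj : supLe ρ c j t = supLe ρ c i t := by
    apply le_antisymm (supLe_mono c hj t)
    rw [hk₁]
    exact val_le_supLe c hk₁j t
  have hcongrLe : ∀ j' : Fin n, j' ≤ i → supLe ρ c' j' t = supLe ρ c j' t := by
    intro j' hj'
    apply supLe_congr
    intro k hk
    rw [hreal k (le_trans hk hj')]
  unfold win
  rw [hcongrLe j hj]
  unfold supGt
  rw [Finset.sup_lt_iff (by rw [hSj]; exact supLe_pos c i t)]
  intro k hk
  simp only [mem_filter, mem_univ, true_and] at hk
  by_cases hki : k ≤ i
  · have : val ρ c' k t = val ρ c k t := by simp [val, hreal k hki]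
    rw [this, hSj]
    exact lt_of_le_of_lt (val_le_supGt c hk t) (lt_of_lt_of_le hwj (supLe_mono c hj t))
  · have h1 : val ρ c' k t ≤ supGt ρ c' i t := val_le_supGt c' hki t
    have h2 : supGt ρ c' i t < supLe ρ c' i t := hwin'
    rw [hcongrLe i (le_refl i), ← hSj] at h2
    exact lt_of_le_of_lt h1 h2

section Swap

variable (c : Coupling n d) (je : Fin n) (t1 t2 : Fin d)

/-- the coupling obtained by exchanging the elements of item `je` between chains `t1`, `t2`. -/
def swapAt : Coupling n d :=
  fun k => if k = je then (Equiv.swap t1 t2).trans (c je) else c k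

lemma swapAt_ne {k : Fin n} (h : k ≠ je) : swapAt c je t1 t2 k = c k := by
  simp [swapAt, h]

lemma swapAt_other {k : Fin n} {t : Fin d} (h1 : t ≠ t1) (h2 : t ≠ t2) :
    swapAt c je t1 t2 k t = c k t := by
  by_cases h : k = je
  · subst h
    simp [swapAt, Equiv.swap_apply_of_ne_of_ne h1 h2]
  · simp [swapAt, h]

lemma swapAt_t1 : swapAt c je t1 t2 je t1 = c je t2 := by
  simp [swapAt]

lemma swapAt_t2 : swapAt c je t1 t2 je t2 = c je t1 := by
  simp [swapAt]

end Swap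

/-- The elementary safe swap step: injecting the buried element `estar` of chain `t1` into the
dead chain `t2` preserves all win-statuses and strictly increases the total of `supLe i`. -/
lemma swap_step (i : Fin n) (cb : Coupling n d)
    {t1 t2 : Fin d} {estar eoth : Fin n × Fin d} {vstar : ℕ}
    (hst : cb estar.1 t1 = estar.2) (hot : cb eoth.1 t1 = eoth.2)
    (hsA : estar.1 ≤ i) (hoA : eoth.1 ≤ i)
    (hlt : ρ estar < ρ eoth)
    (hv : vstar < ρ estar + 1)
    (ht2 : ¬ win ρ cb i t2) (ht2le : supLe ρ cb i t2 ≤ vstar) :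
    ∃ c' : Coupling n d,
      (∀ j, j ≤ i → ∀ t, win ρ cb j t → win ρ c' j t) ∧
      (∑ t, supLe ρ cb i t) < (∑ t, supLe ρ c' i t) := by
  have hvaloth : val ρ cb eoth.1 t1 = ρ eoth + 1 := by simp [val, hot]
  have hvalstar : val ρ cb estar.1 t1 = ρ estar + 1 := by simp [val, hst]
  have hq : ρ estar + 1 < supLe ρ cb i t1 := by
    have h1 : ρ eoth + 1 ≤ supLe ρ cb i t1 := hvaloth ▸ val_le_supLe cb hoA t1
    omega
  have ht1t2 : t1 ≠ t2 := by
    intro h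
    rw [h] at hq
    omega
  set c' : Coupling n d := swapAt cb estar.1 t1 t2 with hc'def
  have hcne : ∀ k, k ≠ estar.1 → ∀ t, c' k t = cb k t := by
    intro k hk t
    rw [hc'def, swapAt_ne _ _ _ _ hk]
  have hc1 : c' estar.1 t1 = cb estar.1 t2 := swapAt_t1 cb estar.1 t1 t2
  have hc2 : c' estar.1 t2 = cb estar.1 t1 := swapAt_t2 cb estar.1 t1 t2
  have hvalc'1 : val ρ c' estar.1 t1 = val ρ cb estar.1 t2 := by
    simp [val, hc1]
  have hvalc'2 : val ρ c' estar.1 t2 = ρ estar + 1 := by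
    simp only [val, hc2, hst]
  have hf : val ρ cb estar.1 t2 ≤ vstar := le_trans (val_le_supLe cb hsA t2) ht2le
  -- other chains are untouched
  have hothLe : ∀ (j : Fin n) (t : Fin d), t ≠ t1 → t ≠ t2 → supLe ρ c' j t = supLe ρ cb j t := by
    intro j t h1 h2
    exact supLe_congr j (fun k _ => swapAt_other cb estar.1 t1 t2 h1 h2)
  have hothGt : ∀ (j : Fin n) (t : Fin d), t ≠ t1 → t ≠ t2 → supGt ρ c' j t = supGt ρ cb j t := by
    intro j t h1 h2
    exact supGt_congr j (fun k _ => swapAt_other cb estar.1 t1 t2 h1 h2)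
  -- the attainer of `supLe i` in chain `t1` survives the swap
  obtain ⟨k₁, hk₁i, hk₁⟩ := exists_attain_supLe cb i t1
  have hk₁ne : k₁ ≠ estar.1 := by
    intro h
    rw [h, hvalstar] at hk₁
    omega
  have hvalk₁ : val ρ c' k₁ t1 = val ρ cb k₁ t1 := by
    simp [val, hcne k₁ hk₁ne t1]
  -- supLe does not decrease anywhere, and strictly increases at t2
  have hsup_t1 : supLe ρ cb i t1 ≤ supLe ρ c' i t1 := by
    rw [hk₁, ← hvalk₁]
    exact val_le_supLe c' hk₁i t1
  have hsup_t2 : supLe ρ cb i t2 < supLe ρ c' i t2 := by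
    have h1 : ρ estar + 1 ≤ supLe ρ c' i t2 := hvalc'2 ▸ val_le_supLe c' hsA t2
    omega
  refine ⟨c', ?_, ?_⟩
  · -- preservation of win statuses
    intro j hj t hw
    by_cases h1 : t = t1
    · rw [h1] at hw ⊢
      -- the safe-t1 argument
      have hk1j : k₁ ≤ j := by
        by_contra hnk
        have h1 : val ρ cb k₁ t1 ≤ supGt ρ cb j t1 := val_le_supGt cb hnk t1
        have h2 : supLe ρ cb j t1 ≤ supLe ρ cb i t1 := supLe_mono cb hj t1
        rw [← hk₁] at h1
        exact absurd (lt_of_le_of_lt (le_trans h2 h1) hw) (lt_irrefl _)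
      have hSj : supLe ρ cb j t1 = supLe ρ cb i t1 := by
        apply le_antisymm (supLe_mono cb hj t1)
        rw [hk₁]
        exact val_le_supLe cb hk1j t1
      have hge : supLe ρ cb j t1 ≤ supLe ρ c' j t1 := by
        rw [hSj, hk₁, ← hvalk₁]
        exact val_le_supLe c' hk1j t1
      apply lt_of_lt_of_le _ hge
      unfold supGt
      rw [Finset.sup_lt_iff (supLe_pos cb j t1)]
      intro k hk
      simp only [mem_filter, mem_univ, true_and] at hk
      by_cases hkje : k = estar.1
      · subst hkje
        rw [hvalc'1]
        have : vstar < supLe ρ cb j t1 := by rw [hSj]; omega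
        omega
      · have hkval : val ρ c' k t1 = val ρ cb k t1 := by simp [val, hcne k hkje t1]
        rw [hkval]
        exact lt_of_le_of_lt (val_le_supGt cb hk t1) hw
    · by_cases h2 : t = t2
      · rw [h2] at hw
        exact absurd hw (not_win_of_le hj ht2)
        
      · unfold win
        rw [hothLe j t h1 h2, hothGt j t h1 h2]
        exact hw
  · -- strict sum increase
    apply Finset.sum_lt_sum
    · intro t _
      by_cases h1 : t = t1
      · subst h1; exact hsup_t1
      · by_cases h2 : t = t2
        · subst h2; exact le_of_lt hsup_t2
        · rw [hothLe i t h1 h2]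
    · exact ⟨t2, Finset.mem_univ t2, hsup_t2⟩

lemma Fcnt_le_d (j : Fin n) (c : Coupling n d) : Fcnt ρ j c ≤ d := by
  unfold Fcnt
  simpa using Finset.card_filter_le (univ : Finset (Fin d)) (fun t => win ρ c j t)

/-- The one-step improvement lemma: if `cb` wins fewer chains at level `i` than `cs` does, then
`cb` can be modified, preserving all win statuses at levels `≤ i`, while strictly increasing the
potential `(d+1) * ∑ supLe i + Fcnt i`. -/
theorem step (hρ : Function.Injective ρ) (i : Fin n) (cb cs : Coupling n d)
    (h : Fcnt ρ i cb < Fcnt ρ i cs) :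
    ∃ c' : Coupling n d,
      (∀ j, j ≤ i → ∀ t, win ρ cb j t → win ρ c' j t) ∧
      (d+1) * (∑ t, supLe ρ cb i t) + Fcnt ρ i cb
        < (d+1) * (∑ t, supLe ρ c' i t) + Fcnt ρ i c' := by
  classical
  set D := univ.filter (fun t => win ρ cb i t) with hDdef
  have hDcard : Fcnt ρ i cb = D.card := rfl
  by_cases hExt : ∃ t', t' ∉ D ∧ Ccond ρ cb i (insert t' D)
  · -- ghost rearrangement case
    obtain ⟨t', ht', hC⟩ := hExt
    obtain ⟨c', hreal, hwin⟩ := realize cb i (insert t' D) hC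
    refine ⟨c', ?_, ?_⟩
    · intro j hj t hw
      have htD : t ∈ D := by
        simp only [hDdef, mem_filter, mem_univ, true_and]
        exact win_of_le hj hw
      exact win_preserve_ghost hreal (hwin t (mem_insert_of_mem htD)) hj hw
    · have hsum : (∑ t, supLe ρ c' i t) = ∑ t, supLe ρ cb i t :=
        Finset.sum_congr rfl (fun t _ => supLe_congr i (fun k hk => by rw [hreal k hk]))
      have hF : D.card + 1 ≤ Fcnt ρ i c' := by
        have hsub : insert t' D ⊆ univ.filter (fun t => win ρ c' i t) := by
          intro t ht
          simp only [mem_filter, mem_univ, true_and]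
          exact hwin t ht
        have := Finset.card_le_card hsub
        rwa [Finset.card_insert_of_notMem ht'] at this
      rw [hsum, hDcard]
      omega
  · -- swap case
    push_neg at hExt
    have hcsd : Fcnt ρ i cs ≤ d := Fcnt_le_d i cs
    have hDlt : D.card < d := by omega
    have houtside : (univ.filter (fun t => t ∉ D)).Nonempty := by
      by_contra hno
      rw [Finset.not_nonempty_iff_eq_empty, Finset.filter_eq_empty_iff] at hno
      have : (univ : Finset (Fin d)) ⊆ D := by
        intro t _
        have := hno (Finset.mem_univ t)
        simpa using this
      have := Finset.card_le_card this
      simp only [card_univ, Fintype.card_fin] at this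
      omega
    obtain ⟨tm, htm, hmax⟩ := Finset.exists_max_image _ (supLe ρ cb i) houtside
    have htmD : tm ∉ D := by simpa using htm
    have hCD : Ccond ρ cb i D := Ccond_of_win cb i (fun t ht => (Finset.mem_filter.mp ht).2)
    have hnC := hExt tm htmD
    unfold Ccond at hnC
    push_neg at hnC
    obtain ⟨v, g, hg', hviol⟩ := hnC
    have hg : ¬ g ≤ i := not_le.mpr hg'
    have h1 : ((insert tm D).filter (fun t => supLe ρ cb i t ≤ v)).card
        ≤ (D.filter (fun t => supLe ρ cb i t ≤ v)).card + 1 := by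
      rw [Finset.filter_insert]
      split
      · exact Finset.card_insert_le _ _
      · omega
    have h2 : (D.filter (fun t => supLe ρ cb i t ≤ v)).card ≤ (lowSet ρ g v).card := hCD v g hg
    have htmle : supLe ρ cb i tm ≤ v := by
      by_contra hgt
      have heq : (insert tm D).filter (fun t => supLe ρ cb i t ≤ v)
          = D.filter (fun t => supLe ρ cb i t ≤ v) := by
        rw [Finset.filter_insert, if_neg (by omega)]
      rw [heq] at hviol
      omega
    have ha : ∀ t, t ∉ D → supLe ρ cb i t ≤ v := by
      intro t ht
      exact le_trans (hmax t (by simpa using ht)) htmle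
    set Khi := univ.filter (fun t => v < supLe ρ cb i t) with hKhi
    have hKhiD : Khi ⊆ D := by
      intro t ht
      by_contra hn
      simp only [hKhi, mem_filter, mem_univ, true_and] at ht
      have := ha t hn
      omega
    have hDbig : Khi.card + (lowSet ρ g v).card ≤ D.card := by
      have hsub : Khi ∪ D.filter (fun t => supLe ρ cb i t ≤ v) ⊆ D :=
        Finset.union_subset hKhiD (Finset.filter_subset _ _)
      have hdisj : Disjoint Khi (D.filter (fun t => supLe ρ cb i t ≤ v)) := by
        rw [Finset.disjoint_left]
        intro a ha1 ha2
        simp only [hKhi, mem_filter, mem_univ, true_and] at ha1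
        simp only [mem_filter] at ha2
        omega
      have := Finset.card_le_card hsub
      rw [Finset.card_union_of_disjoint hdisj] at this
      omega
    set Ds := univ.filter (fun t => win ρ cs i t) with hDs
    set Ebig := (univ : Finset (Fin n × Fin d)).filter (fun e => e.1 ≤ i ∧ v < ρ e + 1)
      with hEbig
    have hDsplit : Ds.card ≤ (lowSet ρ g v).card + Ebig.card := by
      have hsplit := Finset.card_filter_add_card_filter_not
        (s := Ds) (p := fun t => supLe ρ cs i t ≤ v)
      have hlo : (Ds.filter (fun t => supLe ρ cs i t ≤ v)).card ≤ (lowSet ρ g v).card := by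
        apply Finset.card_le_card_of_injOn (fun t => cs g t)
        · intro t ht
          simp only [mem_coe, mem_filter, hDs, mem_univ, true_and] at ht
          obtain ⟨hw, hle⟩ := ht
          have hval : val ρ cs g t ≤ supGt ρ cs i t := val_le_supGt cs hg t
          simp only [mem_coe, lowSet, mem_filter, mem_univ, true_and]
          calc ρ (g, cs g t) + 1 = val ρ cs g t := rfl
            _ ≤ supGt ρ cs i t := hval
            _ < supLe ρ cs i t := hw
            _ ≤ v := hle
        · intro a _ b _ hab
          exact (cs g).injective hab
      have hhi : (Ds.filter (fun t => ¬ supLe ρ cs i t ≤ v)).card ≤ Ebig.card := by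
        apply Finset.card_le_card_of_injOn
          (fun t => ((exists_attain_supLe cs i t).choose, cs (exists_attain_supLe cs i t).choose t))
        · intro t ht
          simp only [mem_coe, mem_filter, hDs, mem_univ, true_and] at ht
          obtain ⟨hw, hle⟩ := ht
          obtain ⟨hki, hkv⟩ := (exists_attain_supLe cs i t).choose_spec
          simp only [mem_coe, hEbig, mem_filter, mem_univ, true_and]
          constructor
          · exact hki
          · have : val ρ cs (exists_attain_supLe cs i t).choose t = supLe ρ cs i t := hkv.symm
            simp only [val] at this
            exact lt_of_lt_of_eq (not_le.mp hle) this.symm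
        · intro a _ b _ hab
          simp only [Prod.mk.injEq] at hab
          obtain ⟨hfst, hsnd⟩ := hab
          rw [hfst] at hsnd
          exact (cs _).injective hsnd
      omega
    have hkE : Khi.card < Ebig.card := by
      have hd : D.card < Ds.card := h
      omega
    have hmapsto : ∀ e ∈ Ebig, (cb e.1).symm e.2 ∈ Khi := by
      intro e he
      simp only [hEbig, mem_filter, mem_univ, true_and] at he
      obtain ⟨he1, he2⟩ := he
      simp only [hKhi, mem_filter, mem_univ, true_and]
      have hval : val ρ cb e.1 ((cb e.1).symm e.2) = ρ e + 1 := by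
        simp [val, Equiv.apply_symm_apply]
      have := val_le_supLe (ρ := ρ) cb he1 ((cb e.1).symm e.2)
      omega
    obtain ⟨e1, he1, e2, he2, hne, heq⟩ :=
      Finset.exists_ne_map_eq_of_card_lt_of_maps_to hkE hmapsto
    have hρne : ρ e1 ≠ ρ e2 := fun hc => hne (hρ hc)
    obtain ⟨t2, ht2f⟩ := houtside
    have ht2D : t2 ∉ D := by simpa using ht2f
    have ht2win : ¬ win ρ cb i t2 := by
      intro hw
      exact ht2D (by simp [hDdef, hw])
    have ht2le : supLe ρ cb i t2 ≤ v := ha t2 ht2D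
    set t1 := (cb e1.1).symm e1.2 with ht1def
    have hch1 : cb e1.1 t1 = e1.2 := Equiv.apply_symm_apply _ _
    have hch2 : cb e2.1 t1 = e2.2 := by
      rw [heq]
      exact Equiv.apply_symm_apply _ _
    have he1' : e1.1 ≤ i ∧ v < ρ e1 + 1 := by simpa [hEbig] using he1
    have he2' : e2.1 ≤ i ∧ v < ρ e2 + 1 := by simpa [hEbig] using he2
    have hkey : ∃ c' : Coupling n d,
        (∀ j, j ≤ i → ∀ t, win ρ cb j t → win ρ c' j t) ∧
        (∑ t, supLe ρ cb i t) < (∑ t, supLe ρ c' i t) := by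
      rcases lt_or_gt_of_ne hρne with hlt | hgt
      · exact swap_step i cb hch1 hch2 he1'.1 he2'.1 hlt he1'.2 ht2win ht2le
      · exact swap_step i cb hch2 hch1 he2'.1 he1'.1 hgt he2'.2 ht2win ht2le
    obtain ⟨c', hpres, hsum⟩ := hkey
    refine ⟨c', hpres, ?_⟩
    have hFb : Fcnt ρ i cb ≤ d := Fcnt_le_d i cb
    have hmul : (d+1) * ((∑ t, supLe ρ cb i t) + 1) ≤ (d+1) * (∑ t, supLe ρ c' i t) :=
      Nat.mul_le_mul_left _ hsum
    calc (d+1) * (∑ t, supLe ρ cb i t) + Fcnt ρ i cb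
        ≤ (d+1) * (∑ t, supLe ρ cb i t) + d := by omega
      _ < (d+1) * ((∑ t, supLe ρ cb i t) + 1) := by ring_nf; omega
      _ ≤ (d+1) * (∑ t, supLe ρ c' i t) := hmul
      _ ≤ (d+1) * (∑ t, supLe ρ c' i t) + Fcnt ρ i c' := Nat.le_add_right _ _

/-- Improvement preserving all levels `≤ i`: if some coupling beats `c` at level `i`, then some
coupling beats `c` at level `i` while doing at least as well at every level `j ≤ i`. -/
theorem core (hρ : Function.Injective ρ) (i : Fin n) (c cstar : Coupling n d)
    (h : Fcnt ρ i c < Fcnt ρ i cstar) :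
    ∃ c', (∀ j, j ≤ i → Fcnt ρ j c ≤ Fcnt ρ j c') ∧ Fcnt ρ i c < Fcnt ρ i c' := by
  classical
  set M : Coupling n d → ℕ := fun c'' => (d+1) * (∑ t, supLe ρ c'' i t) + Fcnt ρ i c'' with hM
  set good : Finset (Coupling n d) :=
    univ.filter (fun c'' => ∀ j, j ≤ i → Fcnt ρ j c ≤ Fcnt ρ j c'') with hgood
  have hne : good.Nonempty := ⟨c, by simp [hgood]⟩
  obtain ⟨cbar, hcbar, hopt⟩ := Finset.exists_max_image good M hne
  have hcbarG : ∀ j, j ≤ i → Fcnt ρ j c ≤ Fcnt ρ j cbar := by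
    simpa [hgood] using hcbar
  by_cases hlt : Fcnt ρ i cbar < Fcnt ρ i cstar
  · exfalso
    obtain ⟨c', hpres, hMlt⟩ := step hρ i cbar cstar hlt
    have hc'G : c' ∈ good := by
      simp only [hgood, mem_filter, mem_univ, true_and]
      intro j hj
      exact le_trans (hcbarG j hj) (Fcnt_le_of_pointwise hpres j hj)
    have := hopt c' hc'G
    simp only [hM] at this
    omega
  · push_neg at hlt
    exact ⟨cbar, hcbarG, lt_of_lt_of_le h hlt⟩

lemma geo_sum (x L : ℕ) : (∑ l ∈ Finset.range L, (x+1)^l * x) < (x+1)^L := by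
  induction L with
  | zero => simp
  | succ L IH =>
    rw [Finset.sum_range_succ, pow_succ]
    have h1 : (x+1)^L * (x+1) = (x+1)^L * x + (x+1)^L := by ring
    omega

/-- There exists a coupling simultaneously maximizing `Fcnt` at every level. -/
theorem global (hρ : Function.Injective ρ) :
    ∃ c : Coupling n d, ∀ (i : Fin n) (c'' : Coupling n d), Fcnt ρ i c'' ≤ Fcnt ρ i c := by
  classical
  obtain ⟨c0, -, hopt⟩ := Finset.exists_max_image (univ : Finset (Coupling n d))
    (fun c => ∑ j : Fin n, (d+1)^(n - 1 - j.val) * Fcnt ρ j c) ⟨fun _ => 1, mem_univ _⟩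
  simp only [mem_univ, forall_const] at hopt
  refine ⟨c0, ?_⟩
  have main : ∀ m : ℕ, ∀ i : Fin n, i.val = m → ∀ c'' : Coupling n d,
      Fcnt ρ i c'' ≤ Fcnt ρ i c0 := by
    intro m
    induction m using Nat.strong_induction_on with
    | _ m IH =>
      intro i him c''
      by_contra hgt
      push_neg at hgt
      obtain ⟨c', hpres, hstrict⟩ := core hρ i c0 c'' hgt
      have hsplit0 := Finset.sum_filter_add_sum_filter_not (univ : Finset (Fin n))
        (fun j => j ≤ i) (fun j => (d+1)^(n - 1 - j.val) * Fcnt ρ j c0)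
      have hsplit' := Finset.sum_filter_add_sum_filter_not (univ : Finset (Fin n))
        (fun j => j ≤ i) (fun j => (d+1)^(n - 1 - j.val) * Fcnt ρ j c')
      -- the tail of c0 is small
      have htail : (∑ j ∈ univ.filter (fun j => ¬ j ≤ i), (d+1)^(n - 1 - j.val) * Fcnt ρ j c0)
          < (d+1)^(n - 1 - i.val) := by
        have hb : ∀ j ∈ univ.filter (fun j : Fin n => ¬ j ≤ i),
            (d+1)^(n - 1 - j.val) * Fcnt ρ j c0 ≤ (d+1)^(n - 1 - j.val) * d := by
          intro j _
          exact Nat.mul_le_mul_left _ (Fcnt_le_d j c0)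
        have h1 := Finset.sum_le_sum hb
        have hinj : ∀ x ∈ univ.filter (fun j : Fin n => ¬ j ≤ i),
            ∀ y ∈ univ.filter (fun j : Fin n => ¬ j ≤ i),
            n - 1 - x.val = n - 1 - y.val → x = y := by
          intro a _ b _ hab
          have han : a.val < n := a.isLt
          have hbn : b.val < n := b.isLt
          exact Fin.ext (by omega)
        have himg := Finset.sum_image (s := univ.filter (fun j : Fin n => ¬ j ≤ i))
          (g := fun j : Fin n => n - 1 - j.val) (f := fun l : ℕ => (d+1)^l * d) hinj
        have hsub : (univ.filter (fun j : Fin n => ¬ j ≤ i)).image (fun j => n - 1 - j.val)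
            ⊆ Finset.range (n - 1 - i.val) := by
          intro l hl
          simp only [Finset.mem_image, mem_filter, mem_univ, true_and] at hl
          obtain ⟨j, hj, rfl⟩ := hl
          have hij : i.val < j.val := by
            rcases lt_or_ge i.val j.val with h' | h'
            · exact h'
            · exact absurd (Fin.le_def.mpr h') hj
          have hjn : j.val < n := j.isLt
          simp only [Finset.mem_range]
          omega
        have h2 : (∑ j ∈ univ.filter (fun j : Fin n => ¬ j ≤ i), (d+1)^(n - 1 - j.val) * d)
            ≤ ∑ l ∈ Finset.range (n - 1 - i.val), (d+1)^l * d := by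
          rw [← himg]
          exact Finset.sum_le_sum_of_subset hsub
        have h3 := geo_sum d (n - 1 - i.val)
        omega
      -- the head of c' gains at least the weight of level i
      have hhead : (∑ j ∈ univ.filter (fun j : Fin n => j ≤ i),
            (d+1)^(n - 1 - j.val) * Fcnt ρ j c0) + (d+1)^(n - 1 - i.val)
          ≤ ∑ j ∈ univ.filter (fun j : Fin n => j ≤ i), (d+1)^(n - 1 - j.val) * Fcnt ρ j c' := by
        have hb : ∀ j ∈ univ.filter (fun j : Fin n => j ≤ i),
            (d+1)^(n - 1 - j.val) * Fcnt ρ j c0 + (if j = i then (d+1)^(n - 1 - i.val) else 0)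
              ≤ (d+1)^(n - 1 - j.val) * Fcnt ρ j c' := by
          intro j hj
          simp only [mem_filter, mem_univ, true_and] at hj
          by_cases hji : j = i
          · subst hji
            simp only [if_pos rfl]
            have hstep : Fcnt ρ j c0 + 1 ≤ Fcnt ρ j c' := hstrict
            calc (d+1)^(n - 1 - j.val) * Fcnt ρ j c0 + (d+1)^(n - 1 - j.val)
                = (d+1)^(n - 1 - j.val) * (Fcnt ρ j c0 + 1) := by ring
              _ ≤ (d+1)^(n - 1 - j.val) * Fcnt ρ j c' := Nat.mul_le_mul_left _ hstep
          · simp only [if_neg hji, add_zero]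
            exact Nat.mul_le_mul_left _ (hpres j hj)
        have h1 := Finset.sum_le_sum hb
        rw [Finset.sum_add_distrib] at h1
        rw [Finset.sum_ite_eq' (univ.filter (fun j : Fin n => j ≤ i)) i
          (fun _ => (d+1)^(n - 1 - i.val))] at h1
        simp only [mem_filter, mem_univ, true_and, le_refl, if_pos] at h1
        exact h1
      have hfinal := hopt c'
      omega
  intro i c''
  exact main i.val i rfl c''
/-- Any strict domination relation (asymmetric, transitive, total across items) can be
represented by an injective rank function into `ℕ`. -/
lemma exists_rank (prec : Fin n × Fin d → Fin n × Fin d → Prop)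
    (hasymm : ∀ a b : Fin n × Fin d, prec a b → ¬ prec b a)
    (htrans : ∀ a b c : Fin n × Fin d, prec a b → prec b c → prec a c)
    (htotal : ∀ a b : Fin n × Fin d, a.1 ≠ b.1 → prec a b ∨ prec b a) :
    ∃ ρ : Fin n × Fin d → ℕ, Function.Injective ρ ∧
      ∀ a b : Fin n × Fin d, a.1 ≠ b.1 → (prec a b ↔ ρ a < ρ b) := by
  classical
  set r : (Fin n × Fin d) → (Fin n × Fin d) → Prop := fun a b => prec a b ∨ a = b with hr
  haveI hpo : IsPartialOrder (Fin n × Fin d) r :=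
    { refl := fun a => Or.inr rfl
      trans := by
        rintro a b c (hab | rfl) (hbc | rfl)
        · exact Or.inl (htrans _ _ _ hab hbc)
        · exact Or.inl hab
        · exact Or.inl hbc
        · exact Or.inr rfl
      antisymm := by
        rintro a b (hab | rfl) hba
        · rcases hba with hba | h
          · exact absurd hba (hasymm _ _ hab)
          · exact h.symm
        · rfl }
  obtain ⟨s, hlin, hsub⟩ := extend_partialOrder r
  have htot : ∀ a b, s a b ∨ s b a := hlin.toTotal.total
  have hstrans : ∀ a b c, s a b → s b c → s a c := fun a b c =>
    hlin.toIsPartialOrder.toIsPreorder.toIsTrans.trans a b c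
  have hanti : ∀ a b, s a b → s b a → a = b :=
    fun a b => hlin.toIsPartialOrder.toAntisymm.antisymm a b
  set ρ : Fin n × Fin d → ℕ :=
    fun a => (univ.filter (fun x => s x a ∧ x ≠ a)).card with hρdef
  have hmono : ∀ a b, s a b → a ≠ b → ρ a < ρ b := by
    intro a b hab hne
    have hsubset : univ.filter (fun x => s x a ∧ x ≠ a)
        ⊆ univ.filter (fun x => s x b ∧ x ≠ b) := by
      intro x hx
      simp only [mem_filter, mem_univ, true_and] at hx ⊢
      obtain ⟨hxa, hxna⟩ := hx
      refine ⟨hstrans _ _ _ hxa hab, ?_⟩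
      intro hxb
      subst hxb
      exact hne (hanti _ _ hab hxa)
    have hmem : a ∈ univ.filter (fun x => s x b ∧ x ≠ b) := by
      simp only [mem_filter, mem_univ, true_and]
      exact ⟨hab, hne⟩
    have hnmem : a ∉ univ.filter (fun x => s x a ∧ x ≠ a) := by
      simp
    exact Finset.card_lt_card ⟨hsubset, fun hc => hnmem (hc hmem)⟩
  have hforward : ∀ a b, prec a b → ρ a < ρ b := by
    intro a b hp
    have hne : a ≠ b := by
      intro h
      subst h
      exact hasymm a a hp hp
    exact hmono a b (hsub _ _ (Or.inl hp)) hne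
  have hinj : Function.Injective ρ := by
    intro a b hab
    by_contra hne
    rcases htot a b with h | h
    · exact absurd hab (Nat.ne_of_lt (hmono a b h hne))
    · exact absurd hab.symm (Nat.ne_of_lt (hmono b a h (Ne.symm hne)))
  refine ⟨ρ, hinj, ?_⟩
  intro a b hab1
  constructor
  · exact hforward a b
  · intro hlt
    rcases htotal a b hab1 with h | h
    · exact h
    · exact absurd (hforward b a h) (by omega)

/-- Bridge: the cumulative count `kCum` coincides with `Fcnt` for a rank function. -/
lemma kCum_eq_Fcnt (prec : Fin n × Fin d → Fin n × Fin d → Prop)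
    (ρ : Fin n × Fin d → ℕ) (hρ : Function.Injective ρ)
    (hiff : ∀ a b : Fin n × Fin d, a.1 ≠ b.1 → (prec a b ↔ ρ a < ρ b))
    (c : Coupling n d) (i : Fin n) : kCum prec c i = Fcnt ρ i c := by
  classical
  have hset : {t : Fin d | ∃ j : Fin n, j ≤ i ∧ DominatedBy prec c j t}
      = ↑(univ.filter (fun t => win ρ c i t)) := by
    ext t
    simp only [Set.mem_setOf_eq, Finset.coe_filter, mem_univ, true_and]
    constructor
    · rintro ⟨j, hji, hdom⟩
      have hval : ∀ k, k ≠ j → val ρ c k t < val ρ c j t := by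
        intro k hk
        have hp := hdom k hk
        have hfst : ((k, c k t) : Fin n × Fin d).1 ≠ ((j, c j t) : Fin n × Fin d).1 := hk
        have := (hiff _ _ hfst).mp hp
        simp only [val]
        omega
      have h1 : supGt ρ c i t < val ρ c j t := by
        unfold supGt
        rw [Finset.sup_lt_iff (show (⊥:ℕ) < val ρ c j t by simp [val])]
        intro k hk
        simp only [mem_filter, mem_univ, true_and] at hk
        have hkj : k ≠ j := by
          intro h
          subst h
          exact hk hji
        exact hval k hkj
      exact lt_of_lt_of_le h1 (val_le_supLe c hji t)
    · intro hw
      obtain ⟨k₁, hk₁i, hk₁⟩ := exists_attain_supLe c i t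
      refine ⟨k₁, hk₁i, ?_⟩
      intro k hk
      have hfst : ((k, c k t) : Fin n × Fin d).1 ≠ ((k₁, c k₁ t) : Fin n × Fin d).1 := hk
      apply (hiff _ _ hfst).mpr
      by_cases hki : k ≤ i
      · have h1 : val ρ c k t ≤ supLe ρ c i t := val_le_supLe c hki t
        rw [hk₁] at h1
        have hne : ρ (k, c k t) ≠ ρ (k₁, c k₁ t) := by
          intro h
          exact hk (congrArg Prod.fst (hρ h))
        simp only [val] at h1
        omega
      · have h1 : val ρ c k t ≤ supGt ρ c i t := val_le_supGt c hki t
        have h2 : supGt ρ c i t < supLe ρ c i t := hw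
        rw [hk₁] at h2
        simp only [val] at h1 h2
        omega
  unfold kCum
  rw [hset, Set.ncard_coe_finset]
  rfl


end SimulCoupling

/-- Fix `n` items, each with a multiset of `d` real utilities
`u i 0 ≥ u i 1 ≥ … ≥ u i (d-1)`, and a strict domination relation `prec` on the utilities that
linearly refines the numerical order: `u_i^t ≺ u_j^r` whenever `u_i^t < u_j^r`, `prec` is
asymmetric and transitive, and any two utilities of distinct items are comparable (in
particular, equal utilities of distinct items are comparable). Then there exists a perfect
coupling `c` that simultaneously realizes `K_{[i]}` for every item `i`. -/


theorem exists_coupling_realizing_all_cumulative_maxima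
    (n d : ℕ) (u : Fin n → Fin d → ℝ)
    (hsorted : ∀ i : Fin n, Antitone (u i))
    (prec : Fin n × Fin d → Fin n × Fin d → Prop)
    (hrefines : ∀ a b : Fin n × Fin d, u a.1 a.2 < u b.1 b.2 → prec a b)
    (hasymm : ∀ a b : Fin n × Fin d, prec a b → ¬ prec b a)
    (htrans : ∀ a b c : Fin n × Fin d, prec a b → prec b c → prec a c)
    (htotal : ∀ a b : Fin n × Fin d, a.1 ≠ b.1 → prec a b ∨ prec b a) :
    ∃ c : Coupling n d, ∀ i : Fin n, kCum prec c i = Kmax prec i := by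
  classical
  obtain ⟨ρ, hρ, hiff⟩ := SimulCoupling.exists_rank prec hasymm htrans htotal
  obtain ⟨c0, hc0⟩ := SimulCoupling.global hρ
  refine ⟨c0, fun i => ?_⟩
  have hb : ∀ c : Coupling n d, kCum prec c i ≤ kCum prec c0 i := by
    intro c
    rw [SimulCoupling.kCum_eq_Fcnt prec ρ hρ hiff c i,
      SimulCoupling.kCum_eq_Fcnt prec ρ hρ hiff c0 i]
    exact hc0 i c
  unfold Kmax
  apply le_antisymm
  · exact le_ciSup (f := fun c : Coupling n d => kCum prec c i)
      (Set.Finite.bddAbove (Set.finite_range _)) c0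
  · exact ciSup_le hb
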